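/- Let q, p be coprime integers with 0 < q < p and q + p odd (so that q/p is of the form odd/even or even/odd). Then there exist a positive integer m and nonzero integers a₁, …, a_m such that q/p = [2a₁, 2a₂, …, 2a_m]; moreover m can be chosen odd when p is even (q/p = odd/even) and even when p is odd (q/p = even/odd). [Claim used in the proof of Proposition 4 (Section 5.2): every such slope has a continued fraction expansion with all entries even] -/

import Mathlib

open Matrix

/-- The group `GL(2,ℤ)`. -/
abbrev GL2Z := Matrix.GeneralLinearGroup (Fin 2) ℤ

/-- The projective line `ℙ¹(ℚ)`. -/
abbrev P1Q := Projectivization ℚ (Fin 2 → ℚ)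

/-- The point `∞ = [1 : 0]` of `ℙ¹(ℚ)`. -/
noncomputable def infty : P1Q :=
  Projectivization.mk ℚ ![1, 0] (by
    intro h; simpa using congrFun h 0)

/-- The point `[x : 1]` of `ℙ¹(ℚ)` corresponding to the rational number `x`. -/
noncomputable def ratPt (x : ℚ) : P1Q :=
  Projectivization.mk ℚ ![x, 1] (by
    intro h; simpa using congrFun h 1)

/-- A matrix in `GL(2,ℤ)` viewed as an invertible matrix over `ℚ`. -/
def glq (M : GL2Z) : Matrix.GeneralLinearGroup (Fin 2) ℚ :=
  Matrix.GeneralLinearGroup.map (Int.castRingHom ℚ) M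

lemma glq_inj (M : GL2Z) :
    Function.Injective ((glq M).val.mulVecLin) := by
  have h : ((glq M)⁻¹).val.mulVecLin ∘ₗ (glq M).val.mulVecLin = LinearMap.id := by
    rw [← Matrix.mulVecLin_mul]
    have : ((glq M)⁻¹).val * (glq M).val = 1 := by
      rw [← Units.val_mul, inv_mul_cancel, Units.val_one]
    rw [this, Matrix.mulVecLin_one]
  intro x y hxy
  have := congrArg ((glq M)⁻¹).val.mulVecLin hxy
  calc x = (((glq M)⁻¹).val.mulVecLin ∘ₗ (glq M).val.mulVecLin) x := by rw [h]; rfl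
    _ = (((glq M)⁻¹).val.mulVecLin ∘ₗ (glq M).val.mulVecLin) y := by
        simpa using this
    _ = y := by rw [h]; rfl

/-- The action of `GL(2,ℤ)` on `ℙ¹(ℚ)` by linear fractional transformations:
`(a b; c d)` sends `[x : y]` to `[ax + by : cx + dy]`. -/
noncomputable def act (M : GL2Z) (x : P1Q) : P1Q :=
  Projectivization.map ((glq M).val.mulVecLin) (glq_inj M) x

/-- The matrix `A₁ = (-1 0; 0 1)`, acting by `x ↦ -x`. -/
def A1 : GL2Z :=
  ⟨!![-1, 0; 0, 1], !![-1, 0; 0, 1], by decide, by decide⟩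

/-- The matrix `A₂ = (-1 2; 0 1)`, acting by `x ↦ 2 - x`. -/
def A2 : GL2Z :=
  ⟨!![-1, 2; 0, 1], !![-1, 2; 0, 1], by decide, by decide⟩

/-- The group `Γ_∞`, generated by the reflections `A₁` and `A₂`. -/
def GammaInf : Subgroup GL2Z := Subgroup.closure {A1, A2}

/-- The group `Γ_r = B Γ_∞ B⁻¹`, for `B ∈ GL(2,ℤ)` with `B·∞ = r`. -/
def Gamma (B : GL2Z) : Subgroup GL2Z :=
  GammaInf.map (MulAut.conj B).toMonoidHom

/-- The group `Γ̂_r`, generated by `Γ_r ∪ Γ_∞`. -/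
def GammaHat (B : GL2Z) : Subgroup GL2Z := Gamma B ⊔ GammaInf
/-- The matrix `E(t) = (1 0; t 1)`. -/
def Emat (t : ℤ) : GL2Z :=
  ⟨!![1, 0; t, 1], !![1, 0; -t, 1],
    by simp [Matrix.mul_fin_two, Matrix.one_fin_two],
    by simp [Matrix.mul_fin_two, Matrix.one_fin_two]⟩

/-- The matrix `F(t) = (1 t; 0 1)`. -/
def Fmat (t : ℤ) : GL2Z :=
  ⟨!![1, t; 0, 1], !![1, -t; 0, 1],
    by simp [Matrix.mul_fin_two, Matrix.one_fin_two],
    by simp [Matrix.mul_fin_two, Matrix.one_fin_two]⟩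

/-- The alternating product `E(a₁) F(a₂) E(a₃) ⋯`;
the boolean records whether the next factor is an `E`. -/
def cfMatAux : Bool → List ℤ → GL2Z
  | _, [] => 1
  | true, t :: l => Emat t * cfMatAux false l
  | false, t :: l => Fmat t * cfMatAux true l

/-- The matrix `E(a₁) F(a₂) E(a₃) ⋯` associated to a continued fraction. -/
def cfMat (l : List ℤ) : GL2Z := cfMatAux true l

/-- The continued fraction value `[a₁, …, a_m] ∈ ℙ¹(ℚ)`: the image of `∞`
(if `m` is odd) resp. of `0` (if `m` is even) under `E(a₁) F(a₂) E(a₃) ⋯`. -/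
noncomputable def cfVal (l : List ℤ) : P1Q :=
  act (cfMat l) (if Odd l.length then infty else ratPt 0)

def Smat : GL2Z :=
  ⟨!![0, 1; 1, 0], !![0, 1; 1, 0], by decide, by decide⟩

lemma Smat_mul_Smat : Smat * Smat = 1 := by
  apply Units.ext; decide

lemma FS_eq (t : ℤ) : Fmat t * Smat = Smat * Emat t := by
  apply Units.ext
  show (!![1, t; 0, 1] : Matrix (Fin 2) (Fin 2) ℤ) * !![0,1;1,0] = !![0,1;1,0] * !![1,0;t,1]
  simp [Matrix.mul_fin_two]

lemma ES_eq (t : ℤ) : Emat t * Smat = Smat * Fmat t := by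
  apply Units.ext
  show (!![1, 0; t, 1] : Matrix (Fin 2) (Fin 2) ℤ) * !![0,1;1,0] = !![0,1;1,0] * !![1,t;0,1]
  simp [Matrix.mul_fin_two]

lemma cfMatAux_conj (l : List ℤ) : ∀ b : Bool, cfMatAux (!b) l = Smat * cfMatAux b l * Smat := by
  induction l with
  | nil =>
    intro b
    cases b <;>
    · show (1 : GL2Z) = Smat * 1 * Smat
      rw [mul_one, Smat_mul_Smat]
  | cons t l ih =>
    intro b
    cases b with
    | true =>
      show Fmat t * cfMatAux true l = Smat * (Emat t * cfMatAux false l) * Smat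
      have h := ih false
      rw [show (!false) = true from rfl] at h
      rw [h]
      simp only [← mul_assoc]
      rw [FS_eq]
    | false =>
      show Emat t * cfMatAux false l = Smat * (Fmat t * cfMatAux true l) * Smat
      have h := ih true
      rw [show (!true) = false from rfl] at h
      rw [h]
      simp only [← mul_assoc]
      rw [ES_eq]

lemma act_mul (M N : GL2Z) (x : P1Q) : act (M * N) x = act M (act N x) := by
  induction x using Projectivization.ind with
  | h v hv =>
    show Projectivization.map _ _ _ = _
    rw [Projectivization.map_mk]
    unfold act
    rw [Projectivization.map_mk, Projectivization.map_mk]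
    have hvec : (glq (M * N)).val.mulVecLin v
        = (glq M).val.mulVecLin ((glq N).val.mulVecLin v) := by
      have : glq (M * N) = glq M * glq N := by
        unfold glq; exact map_mul _ _ _
      rw [this, Units.val_mul, Matrix.mulVecLin_mul]
      rfl
    exact (Projectivization.mk_eq_mk_iff' ℚ _ _ _ _).2 ⟨1, by simp [hvec]⟩

lemma act_one (x : P1Q) : act 1 x = x := by
  induction x using Projectivization.ind with
  | h v hv =>
    show Projectivization.map _ _ _ = _
    rw [Projectivization.map_mk]
    have hvec : (glq 1).val.mulVecLin v = v := by
      have : glq (1 : GL2Z) = 1 := by unfold glq; exact map_one _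
      rw [this, Units.val_one, Matrix.mulVecLin_one]; rfl
    exact (Projectivization.mk_eq_mk_iff' ℚ _ _ _ _).2 ⟨1, by simp [hvec]⟩

lemma glq_val (M : GL2Z) : (glq M).val = (M.val).map (Int.cast : ℤ → ℚ) := rfl

lemma mulVec_two (A : Matrix (Fin 2) (Fin 2) ℚ) (x y : ℚ) :
    A.mulVec ![x, y] = ![A 0 0 * x + A 0 1 * y, A 1 0 * x + A 1 1 * y] := by
  funext i
  fin_cases i <;>
    simp [Matrix.mulVec, dotProduct, Fin.sum_univ_two]

lemma act_ratPt (M : GL2Z) (t : ℚ)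
    (hd : (M.val 1 0 : ℚ) * t + (M.val 1 1 : ℚ) ≠ 0) :
    act M (ratPt t) = ratPt (((M.val 0 0 : ℚ) * t + (M.val 0 1 : ℚ)) /
      ((M.val 1 0 : ℚ) * t + (M.val 1 1 : ℚ))) := by
  unfold act ratPt
  rw [Projectivization.map_mk]
  apply (Projectivization.mk_eq_mk_iff' ℚ _ _ _ _).2
  refine ⟨(M.val 1 0 : ℚ) * t + (M.val 1 1 : ℚ), ?_⟩
  have hv : (glq M).val.mulVecLin ![t, 1]
      = ![(M.val 0 0 : ℚ) * t + (M.val 0 1 : ℚ), (M.val 1 0 : ℚ) * t + (M.val 1 1 : ℚ)] := by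
    rw [Matrix.mulVecLin_apply, glq_val, mulVec_two]
    simp [Matrix.map_apply]
  rw [hv]
  funext i
  fin_cases i <;> simp
  · field_simp

lemma act_Smat_flip (n : ℕ) :
    (if Odd (n + 1) then infty else ratPt 0)
      = act Smat (if Odd n then infty else ratPt 0) := by
  rcases Nat.even_or_odd n with he | ho
  · rw [if_pos (Nat.odd_add_one.2 (Nat.not_odd_iff_even.2 he)), if_neg (Nat.not_odd_iff_even.2 he)]
    symm
    unfold act ratPt infty
    rw [Projectivization.map_mk]
    apply (Projectivization.mk_eq_mk_iff' ℚ _ _ _ _).2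
    refine ⟨1, ?_⟩
    have : (glq Smat).val.mulVecLin ![0, 1] = ![1, 0] := by
      rw [Matrix.mulVecLin_apply, glq_val, mulVec_two]
      simp [Smat, Matrix.map_apply]
    rw [this]; simp
  · rw [if_pos ho, if_neg (fun hc => Nat.odd_add_one.1 hc ho)]
    symm
    unfold act ratPt infty
    rw [Projectivization.map_mk]
    apply (Projectivization.mk_eq_mk_iff' ℚ _ _ _ _).2
    refine ⟨1, ?_⟩
    have : (glq Smat).val.mulVecLin ![1, 0] = ![0, 1] := by
      rw [Matrix.mulVecLin_apply, glq_val, mulVec_two]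
      simp [Smat, Matrix.map_apply]
    rw [this]; simp

lemma cfVal_nil : cfVal [] = ratPt 0 := by
  unfold cfVal
  rw [if_neg (by simp), show cfMat [] = 1 from rfl, act_one]

lemma cfVal_cons (a : ℤ) (l : List ℤ) (t : ℚ) (h : cfVal l = ratPt t)
    (hne : t + (a : ℚ) ≠ 0) :
    cfVal (a :: l) = ratPt (1 / (t + (a : ℚ))) := by
  have hmat : cfMat (a :: l) = Emat a * Smat * cfMat l * Smat := by
    show Emat a * cfMatAux false l = _
    have := cfMatAux_conj l true
    rw [show (!true) = false from rfl] at this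
    rw [this]
    show Emat a * (Smat * cfMat l * Smat) = _
    rw [← mul_assoc, ← mul_assoc]
  unfold cfVal
  rw [hmat, List.length_cons, act_Smat_flip, ← act_mul, mul_assoc,
    Smat_mul_Smat, mul_one, act_mul]
  have hl : act (cfMat l) (if Odd l.length then infty else ratPt 0) = ratPt t := h
  rw [hl]
  have hES : ((Emat a * Smat).val : Matrix (Fin 2) (Fin 2) ℤ) = !![0, 1; 1, a] := by
    show (!![1,0;a,1] : Matrix (Fin 2) (Fin 2) ℤ) * !![0,1;1,0] = _
    simp [Matrix.mul_fin_two]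
  rw [act_ratPt]
  · rw [hES]; norm_num
  · rw [hES]
    intro hh
    apply hne
    simp at hh
    linarith

lemma exists_round (q p : ℤ) (hq : q ≠ 0) : ∃ a : ℤ, |p - 2*a*q| ≤ |q| := by
  refine ⟨round ((p : ℚ) / (2*q)), ?_⟩
  set a : ℤ := round ((p : ℚ) / (2*q)) with ha
  have hq' : ((q:ℚ)) ≠ 0 := Int.cast_ne_zero.2 hq
  have h1 : |(p : ℚ) / (2*q) - a| ≤ 1/2 := abs_sub_round _
  have h2 : |((p - 2*a*q : ℤ) : ℚ)| ≤ |(q:ℚ)| := by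
    have := mul_le_mul_of_nonneg_right h1 (abs_nonneg (2*(q:ℚ)))
    rw [← abs_mul] at this
    have heq : ((p : ℚ) / (2*q) - a) * (2*q) = ((p - 2*a*q : ℤ) : ℚ) := by
      field_simp
      push_cast; ring
    rw [heq] at this
    calc |((p - 2*a*q : ℤ) : ℚ)| ≤ 1/2 * |2*(q:ℚ)| := this
      _ = |(q:ℚ)| := by
        rw [abs_mul, abs_two]
        ring
  have := h2
  rw [← Int.cast_abs, ← Int.cast_abs] at this
  exact_mod_cast this

lemma odd_abs_int (q : ℤ) : Odd |q| ↔ Odd q := by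
  rcases abs_choice q with h | h <;> rw [h]
  simp [odd_neg]

lemma gcd_shift (q p a : ℤ) : Int.gcd (p - 2*a*q) q = Int.gcd q p := by
  apply Nat.dvd_antisymm
  · have h1 : ((Int.gcd (p - 2*a*q) q : ℤ)) ∣ q := Int.gcd_dvd_right _ _
    have h2 : ((Int.gcd (p - 2*a*q) q : ℤ)) ∣ (p - 2*a*q) := Int.gcd_dvd_left _ _
    have h3 : ((Int.gcd (p - 2*a*q) q : ℤ)) ∣ p := by
      have := dvd_add h2 (h1.mul_left (2*a))
      simpa using this
    exact Int.natCast_dvd_natCast.1 (Int.dvd_coe_gcd h1 h3)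
  · have h1 : ((Int.gcd q p : ℤ)) ∣ q := Int.gcd_dvd_left _ _
    have h2 : ((Int.gcd q p : ℤ)) ∣ p := Int.gcd_dvd_right _ _
    have h3 : ((Int.gcd q p : ℤ)) ∣ (p - 2*a*q) := by
      exact dvd_sub h2 (h1.mul_left (2*a))
    exact Int.natCast_dvd_natCast.1 (Int.dvd_coe_gcd h3 h1)

lemma cf_aux : ∀ n : ℕ, ∀ q p : ℤ, p.natAbs ≤ n → 0 < p → q ≠ 0 → |q| < p →
    Int.gcd q p = 1 → Odd (q + p) →
    ∃ l : List ℤ, l ≠ [] ∧ (∀ x ∈ l, x ≠ 0) ∧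
      cfVal (l.map fun x => 2 * x) = ratPt ((q : ℚ) / (p : ℚ)) ∧
      (Even p → Odd l.length) ∧ (Odd p → Even l.length) := by
  intro n
  induction n using Nat.strong_induction_on with
  | _ n ih =>
  intro q p hpn hp hq hqlt hcop hodd
  have hq1 : (1:ℤ) ≤ |q| := Int.one_le_abs hq
  by_cases habs : |q| = 1
  · -- base case q = ±1
    have hqpm : q = 1 ∨ q = -1 := by
      rcases (abs_eq (by norm_num : (0:ℤ) ≤ 1)).1 habs with h | h
      · exact Or.inl h
      · exact Or.inr h
    have hqodd : Odd q := by
      rcases hqpm with h | h <;> rw [h] <;> decide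
    have heven : Even p := (Int.odd_add.1 hodd).1 hqodd
    obtain ⟨k, hk⟩ := heven
    have hk0 : 0 < k := by linarith
    refine ⟨[q*k], by simp, ?_, ?_, ?_, ?_⟩
    · intro x hx
      simp at hx
      rw [hx]
      exact mul_ne_zero hq (by linarith)
    · have hmap : ([q*k].map fun x => 2 * x) = [2*(q*k)] := by simp
      rw [hmap]
      have hne0 : (0:ℚ) + ((2*(q*k) : ℤ) : ℚ) ≠ 0 := by
        rw [zero_add]
        exact_mod_cast mul_ne_zero (by norm_num : (2:ℤ) ≠ 0) (mul_ne_zero hq (by linarith))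
      rw [cfVal_cons (2*(q*k)) [] 0 cfVal_nil hne0]
      congr 1
      rcases hqpm with h | h <;> subst h <;> rw [hk] <;> push_cast <;>
        rw [div_eq_div_iff (by rw [zero_add]; push_cast; intro hc; apply hk0.ne'; exact_mod_cast (by linarith [hc] : (k:ℚ) = 0)) (by push_cast; intro hc; apply hk0.ne'; exact_mod_cast (by linarith [hc] : (k:ℚ) = 0))] <;> ring
    · intro _
      exact ⟨0, by simp⟩
    · intro hoddp
      exact absurd hoddp (Int.not_odd_iff_even.2 ⟨k, hk⟩)
  · -- inductive case |q| ≥ 2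
    have h2 : 2 ≤ |q| := lt_of_le_of_ne hq1 (Ne.symm habs)
    obtain ⟨a, har⟩ := exists_round q p hq
    set r := p - 2*a*q with hr
    have hoddrq : Odd (r + q) := by
      obtain ⟨k, hk⟩ := hodd
      exact ⟨k - a*q, by rw [hr]; linarith⟩
    have hrneq : |r| ≠ |q| := by
      intro h
      have : ¬ Odd (r + q) := by
        rcases abs_eq_abs.1 h with h1 | h1
        · rw [h1]
          exact Int.not_odd_iff_even.2 ⟨q, rfl⟩
        · rw [h1]
          simp
      exact this hoddrq
    have hrlt : |r| < |q| := lt_of_le_of_ne har hrneq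
    have hrne : r ≠ 0 := by
      intro h0
      have hdvd : q ∣ p := ⟨2*a, by rw [hr] at h0; linarith⟩
      have hd1 : q ∣ ((Int.gcd q p : ℤ)) := Int.dvd_coe_gcd dvd_rfl hdvd
      rw [hcop] at hd1
      have : |q| = 1 := by
        rcases Int.isUnit_iff.1 (isUnit_of_dvd_one hd1) with h | h <;> rw [h] <;> rfl
      exact habs this
    have hane : a ≠ 0 := by
      intro h0
      rw [h0] at hr
      simp at hr
      rw [hr] at hrlt
      rw [abs_of_pos hp] at hrlt
      linarith
    set s : ℤ := if 0 < q then 1 else -1 with hs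
    have hsq : s = 1 ∨ s = -1 := by
      by_cases h : 0 < q <;> simp [hs, h]
    have hp1 : s * q = |q| := by
      by_cases h : 0 < q
      · rw [hs, if_pos h, one_mul, abs_of_pos h]
      · rw [hs, if_neg h, abs_of_neg (lt_of_le_of_ne (not_lt.1 h) hq), neg_one_mul]
    set q1 := s * r with hq1def
    set p1 := s * q with hp1def
    have hp1pos : 0 < p1 := by rw [hp1]; linarith
    have hq1ne : q1 ≠ 0 := by
      rcases hsq with h | h <;> rw [hq1def, h] <;> simpa using hrne
    have habs_q1 : |q1| = |r| := by
      rcases hsq with h | h <;> rw [hq1def, h] <;> simp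
    have hlt1 : |q1| < p1 := by rw [habs_q1, hp1]; exact hrlt
    have hcop1 : Int.gcd q1 p1 = 1 := by
      have hns : s.natAbs = 1 := by rcases hsq with h | h <;> rw [h] <;> rfl
      rw [hq1def, hp1def, Int.gcd_mul_left, hns, one_mul, hr, gcd_shift]
      exact hcop
    have hodd1 : Odd (q1 + p1) := by
      rcases hsq with h | h
      · rw [hq1def, hp1def, h]
        simpa using hoddrq
      · rw [hq1def, hp1def, h]
        obtain ⟨k, hk⟩ := hoddrq
        exact ⟨-(k+1), by linarith⟩
    have hm : p1.natAbs < n := by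
      have h1 : p1.natAbs = q.natAbs := by
        rw [hp1]
        exact Int.natAbs_abs q
      have h2' : q.natAbs < p.natAbs := by
        rw [Int.abs_eq_natAbs] at hqlt
        omega
      omega
    obtain ⟨l1, hl1ne, hl1nz, hl1val, hl1ev, hl1od⟩ :=
      ih p1.natAbs hm q1 p1 le_rfl hp1pos hq1ne hlt1 hcop1 hodd1
    refine ⟨a :: l1, by simp, ?_, ?_, ?_, ?_⟩
    · intro x hx
      rcases List.mem_cons.1 hx with h | h
      · rw [h]; exact hane
      · exact hl1nz x h
    · have hmap : ((a :: l1).map fun x => 2 * x) = (2*a) :: (l1.map fun x => 2 * x) := by simp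
      rw [hmap]
      have hqQ : ((q:ℚ)) ≠ 0 := Int.cast_ne_zero.2 hq
      have hpQ : ((p:ℚ)) ≠ 0 := Int.cast_ne_zero.2 hp.ne'
      have ht : ((q1:ℚ))/((p1:ℚ)) = (r:ℚ)/(q:ℚ) := by
        rcases hsq with h | h
        · rw [hq1def, hp1def, h]
          push_cast
          norm_num
        · rw [hq1def, hp1def, h]
          push_cast
          rw [neg_one_mul, neg_one_mul, neg_div_neg_eq]
      have hrQ : (r:ℚ) = (p:ℚ) - 2*(a:ℚ)*(q:ℚ) := by exact_mod_cast hr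
      have hsum : ((q1:ℚ))/((p1:ℚ)) + ((2*a : ℤ):ℚ) = (p:ℚ)/(q:ℚ) := by
        rw [ht, hrQ]
        push_cast
        field_simp
        ring
      have hne : ((q1:ℚ))/((p1:ℚ)) + ((2*a : ℤ):ℚ) ≠ 0 := by
        rw [hsum]
        exact div_ne_zero hpQ hqQ
      rw [cfVal_cons (2*a) (l1.map fun x => 2 * x) _ hl1val hne]
      rw [hsum]
      rw [one_div_div]
    · intro hevp
      have hqodd : Odd q := (Int.odd_add.1 hodd).2 hevp
      have hp1odd : Odd p1 := by
        rw [hp1]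
        exact (odd_abs_int q).2 hqodd
      have := hl1od hp1odd
      simp only [List.length_cons]
      exact Nat.odd_add_one.2 (Nat.not_odd_iff_even.2 this)
    · intro hpodd
      have hqev : Even q := by
        have := (Int.odd_add.1 hodd)
        rw [← Int.not_odd_iff_even]
        intro hqodd
        exact (Int.not_odd_iff_even.2 (this.1 hqodd)) hpodd
      have hp1ev : Even p1 := by
        rw [hp1]
        rcases abs_choice q with h | h <;> rw [h]
        · exact hqev
        · exact hqev.neg
      have := hl1ev hp1ev
      simp only [List.length_cons]
      exact Nat.even_add_one.2 (Nat.not_even_iff_odd.2 this)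

/-- **Even continued fraction expansions (Section 5.2).** If `q, p` are coprime,
`0 < q < p` and `q + p` is odd, then `q/p = [2a₁, 2a₂, …, 2a_m]` for some `m ≥ 1`
and nonzero integers `a₁, …, a_m`; moreover `m` can be chosen odd when `p` is even
and even when `p` is odd. -/
theorem exists_even_continued_fraction (q p : ℤ) (hq : 0 < q) (hqp : q < p)
    (hcop : Int.gcd q p = 1) (hodd : Odd (q + p)) :
    ∃ l : List ℤ, l ≠ [] ∧ (∀ x ∈ l, x ≠ 0) ∧
      cfVal (l.map fun x => 2 * x) = ratPt ((q : ℚ) / (p : ℚ)) ∧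
      (Even p → Odd l.length) ∧ (Odd p → Even l.length) := by
  exact cf_aux p.natAbs q p le_rfl (by linarith) hq.ne' (by rwa [abs_of_pos hq]) hcop hodd
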